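/- arXiv:2506.19756 — 4 statements merged into one kernel-verified Lean document; each statement's English description precedes it below -/
import Mathlib

section
/- For all natural numbers n and k with 0 ≤ k ≤ ⌊n/2⌋, one has (n−2k)! · k! ≥ ⌊n/3⌋!. -/
/-- For all natural numbers `n` and `k` with `k ≤ ⌊n/2⌋`,
one has `(n − 2k)! · k! ≥ ⌊n/3⌋!`. -/
theorem factorial_mul_factorial_ge (n k : ℕ) (h : k ≤ n / 2) :
    (n - 2 * k).factorial * k.factorial ≥ (n / 3).factorial := by
  rcases le_or_gt k (n / 3) with hk | hk
  · calc (n / 3).factorial ≤ (n - 2 * k).factorial := Nat.factorial_le (by omega)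
      _ ≤ (n - 2 * k).factorial * k.factorial :=
        Nat.le_mul_of_pos_right _ k.factorial_pos
  · calc (n / 3).factorial ≤ k.factorial := Nat.factorial_le hk.le
      _ ≤ (n - 2 * k).factorial * k.factorial :=
        Nat.le_mul_of_pos_left _ (n - 2 * k).factorial_pos
end

section
/- Let N be a positive natural number, β > 0 a real number, and g : Fin N → ℝ injective. If c, c' : Fin N → ℝ satisfy, for every j ∈ Fin N, Σ_{i ∈ Fin N} c(i) · (exp(−β·g(i)))^(j+1) = Σ_{i ∈ Fin N} c'(i) · (exp(−β·g(i)))^(j+1), then c = c'. In particular, the numbers of secondary structures at each energy level are uniquely determined by the N magnified partition-function values b_j = Σ_i c(i)·(exp(−β·g(i)))^j for j = 1,…,N. -/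
/-- Let `N > 0`, `β > 0` and `g : Fin N → ℝ` injective. If `c, c' : Fin N → ℝ` give the
same magnified partition-function values
`Σ_i c i · (exp (−β · g i))^(j+1)` for every `j : Fin N`, then `c = c'`. -/
theorem counts_determined_by_magnified_pf (N : ℕ) (hN : 0 < N) (β : ℝ) (hβ : 0 < β)
    (g : Fin N → ℝ) (hg : Function.Injective g) (c c' : Fin N → ℝ)
    (h : ∀ j : Fin N,
      ∑ i : Fin N, c i * (Real.exp (-β * g i)) ^ ((j : ℕ) + 1) =
      ∑ i : Fin N, c' i * (Real.exp (-β * g i)) ^ ((j : ℕ) + 1)) :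
    c = c' := by
  set x : Fin N → ℝ := fun i => Real.exp (-β * g i) with hx
  have hxinj : Function.Injective x := by
    intro a b hab
    have := Real.exp_injective hab
    have : g a = g b := by
      exact mul_left_cancel₀ (neg_ne_zero.mpr (ne_of_gt hβ)) this
    exact hg this
  have hxne : ∀ i, x i ≠ 0 := fun i => (Real.exp_pos _).ne'
  have key : (fun i => (c i - c' i) * x i) = 0 := by
    apply Matrix.eq_zero_of_forall_pow_sum_mul_pow_eq_zero hxinj
    intro j
    have := h j
    simp only [sub_mul, Finset.sum_sub_distrib]
    have e : ∀ (d : Fin N → ℝ), ∑ i, d i * x i * x i ^ (j : ℕ)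
        = ∑ i, d i * x i ^ ((j : ℕ) + 1) := by
      intro d; apply Finset.sum_congr rfl; intro i _; ring
    rw [e, e, this, sub_self]
  funext i
  have := congrFun key i
  simp only [Pi.zero_apply] at this
  have := (mul_eq_zero.mp this).resolve_right (hxne i)
  linarith
end

section
/- Let Ω be a nonempty finite set, G : Ω → ℝ, and let B > 1, δ > 0, and x be real numbers such that the cardinality of Ω is strictly less than B and every value G(S) satisfies either G(S) ≤ x or G(S) ≥ x + δ. Then the minimum of G over Ω is at most x if and only if Σ_{S ∈ Ω} B^(−G(S)/δ) ≥ B^(−x/δ). -/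
/-- Correctness of the magnification reduction from dMFE to dPF: let `Ω` be a nonempty
finite set, `G : Ω → ℝ`, `B > 1`, `δ > 0`, `x : ℝ`, with `|Ω| < B` and every value `G S`
satisfying `G S ≤ x` or `G S ≥ x + δ`. Then the minimum of `G` over `Ω` is at most `x`
iff `Σ_{S ∈ Ω} B^(−G S / δ) ≥ B^(−x / δ)`. -/
theorem dMFE_iff_dPF {Ω : Type*} [Fintype Ω] [Nonempty Ω]
    (G : Ω → ℝ) (B δ x : ℝ) (hB : 1 < B) (hδ : 0 < δ)
    (hcard : (Fintype.card Ω : ℝ) < B)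
    (hlevels : ∀ S : Ω, G S ≤ x ∨ G S ≥ x + δ) :
    Finset.univ.inf' Finset.univ_nonempty G ≤ x ↔
      ∑ S : Ω, B ^ (-(G S) / δ) ≥ B ^ (-x / δ) := by
  have hB0 : (0:ℝ) < B := lt_trans zero_lt_one hB
  constructor
  · intro h
    obtain ⟨S0, -, hS0⟩ := Finset.exists_mem_eq_inf' Finset.univ_nonempty G
    have hGS0 : G S0 ≤ x := hS0 ▸ h
    calc B ^ (-x / δ) ≤ B ^ (-(G S0) / δ) := by
          apply Real.rpow_le_rpow_left_iff hB |>.mpr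
          apply div_le_div_of_nonneg_right _ hδ.le
          linarith
      _ ≤ ∑ S : Ω, B ^ (-(G S) / δ) :=
          Finset.single_le_sum (f := fun S => B ^ (-(G S)/δ)) (fun S _ => (Real.rpow_pos_of_pos hB0 _).le)
            (Finset.mem_univ S0)
  · intro h
    by_contra hc
    push_neg at hc
    have hall : ∀ S : Ω, x + δ ≤ G S := by
      intro S
      rcases hlevels S with h1 | h1
      · exact absurd (Finset.inf'_le G (Finset.mem_univ S) |>.trans h1) (not_le.mpr hc)
      · exact h1
    have hbound : ∀ S : Ω, B ^ (-(G S) / δ) ≤ B ^ (-x/δ) / B := by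
      intro S
      have heq : B ^ (-(x+δ)/δ) * B = B ^ (-x/δ) := by
        nth_rewrite 2 [← Real.rpow_one B]
        rw [← Real.rpow_add hB0]
        congr 1
        field_simp
        ring
      rw [← heq, mul_div_assoc, div_self (ne_of_gt hB0), mul_one]
      apply Real.rpow_le_rpow_left_iff hB |>.mpr
      apply div_le_div_of_nonneg_right _ hδ.le
      linarith [hall S]
    have hsum : ∑ S : Ω, B ^ (-(G S) / δ) ≤ (Fintype.card Ω) * (B ^ (-x/δ) / B) := by
      calc ∑ S : Ω, B ^ (-(G S) / δ) ≤ ∑ _S : Ω, B ^ (-x/δ) / B :=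
            Finset.sum_le_sum fun S _ => hbound S
        _ = (Fintype.card Ω) * (B ^ (-x/δ) / B) := by
            rw [Finset.sum_const, Finset.card_univ, nsmul_eq_mul]
    have hlt : (Fintype.card Ω : ℝ) * (B ^ (-x/δ) / B) < B ^ (-x/δ) := by
      have hpos : 0 < B ^ (-x/δ) := Real.rpow_pos_of_pos hB0 _
      rw [div_eq_mul_inv, ← mul_assoc, mul_comm ((Fintype.card Ω:ℝ)) _, mul_assoc]
      nth_rewrite 2 [← mul_one (B ^ (-x/δ))]
      apply mul_lt_mul_of_pos_left _ hpos
      rw [← div_eq_mul_inv, div_lt_one hB0]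
      exact hcard
    linarith [le_trans h hsum]
end

section
/- Let (a_1,…,a_k, w, B) be a 4-PARTITION instance: k is a positive multiple of 4, w : {1,…,k} → ℤ⁺, B ∈ ℤ⁺, B/5 < w(a_i) < B/3 for all i, and Σ_{i=1}^k w(a_i) = B·k/4. Let s be the DNA strand C^{w(a_1)} A C^{w(a_2)} A ⋯ A C^{w(a_k)} A A A G^B A G^B A ⋯ A G^B (with k/4 substrings G^B separated by single A's), and let K = Σ_{i=1}^k w(a_i) − k. Then there exists a secondary structure S of s with BPS(S) = K if and only if {1,…,k} can be partitioned into k/4 four-element subsets each of total weight exactly B. -/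
/-- DNA bases. -/
inductive Base : Type
  | A | C | G | T
  deriving DecidableEq

/-- Watson–Crick complementarity: `{b₁, b₂} = {A, T}` or `{b₁, b₂} = {C, G}`. -/
def Complementary (b₁ b₂ : Base) : Prop :=
  (b₁ = Base.A ∧ b₂ = Base.T) ∨ (b₁ = Base.T ∧ b₂ = Base.A) ∨
  (b₁ = Base.C ∧ b₂ = Base.G) ∨ (b₁ = Base.G ∧ b₂ = Base.C)

/-- A secondary structure of a strand `s` (a word over `{A,C,G,T}`, positions `1,…,|s|`):
a finite set of pairs `(i, j)` of positions with `1 ≤ i < j ≤ |s|`, each position in at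
most one pair, and paired bases complementary. Pseudoknots are allowed. -/
def IsSecStructOf (s : List Base) (S : Finset (ℕ × ℕ)) : Prop :=
  (∀ p ∈ S, 1 ≤ p.1 ∧ p.1 < p.2 ∧ p.2 ≤ s.length ∧
    Complementary (s.getD (p.1 - 1) Base.A) (s.getD (p.2 - 1) Base.A)) ∧
  (∀ p ∈ S, ∀ q ∈ S, p ≠ q →
    p.1 ≠ q.1 ∧ p.1 ≠ q.2 ∧ p.2 ≠ q.1 ∧ p.2 ≠ q.2)

/-- The number of base pair stackings of `S`: `BPS(S) = |{(i,j) ∈ S : (i+1, j−1) ∈ S}|`. -/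
def BPS (S : Finset (ℕ × ℕ)) : ℕ :=
  (S.filter (fun p => (p.1 + 1, p.2 - 1) ∈ S)).card

/-- The strand `C^{w(a₁)} A C^{w(a₂)} A ⋯ A C^{w(a_k)} A A A G^B A G^B A ⋯ A G^B`
(with `k/4` substrings `G^B` separated by single `A`'s) of Lyngsø's reduction. -/
def lyngsoStrand (k B : ℕ) (w : Fin k → ℕ) : List Base :=
  (List.ofFn (fun i : Fin k => List.replicate (w i) Base.C ++ [Base.A])).flatten
    ++ [Base.A, Base.A]
    ++ List.intercalate [Base.A] (List.replicate (k / 4) (List.replicate B Base.G))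

namespace Lyng
open List

lemma getD_replicate {α} (x d : α) {n i : ℕ} (h : i < n) :
    (List.replicate n x).getD i d = x := by
  rw [List.getD_eq_getElem _ _ (by simpa using h)]
  simp

def cpre (l : List ℕ) (i : ℕ) : ℕ := (l.take i).sum + i

lemma cpre_zero (l : List ℕ) : cpre l 0 = 0 := by simp [cpre]

lemma cpre_succ (l : List ℕ) (i : ℕ) (h : i < l.length) :
    cpre l (i+1) = cpre l i + l[i] + 1 := by
  simp only [cpre, List.sum_take_succ l i h]; ring

lemma cpre_add_le (l : List ℕ) {i j : ℕ} (hij : i < j) (hj : j ≤ l.length) :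
    cpre l i + l[i]'(lt_of_lt_of_le hij hj) + 1 ≤ cpre l j := by
  induction j with
  | zero => omega
  | succ j ih =>
    rcases Nat.lt_or_ge i j with h | h
    · have := ih h (le_of_lt hj)
      have h2 : cpre l (j+1) = cpre l j + l[j]'(by omega) + 1 := cpre_succ l j (by omega)
      omega
    · have : i = j := by omega
      subst this
      rw [cpre_succ l i (by omega)]

lemma cpre_uniq (l : List ℕ) {i d i' d' : ℕ} (hi : i < l.length) (hi' : i' < l.length)
    (hd : d < l[i]) (hd' : d' < l[i'])
    (h : cpre l i + d = cpre l i' + d') : i = i' ∧ d = d' := by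
  rcases lt_trichotomy i i' with hlt | heq | hgt
  · have := cpre_add_le l hlt (le_of_lt hi')
    have : cpre l i' ≤ cpre l i' + d' := Nat.le_add_right _ _
    omega
  · subst heq; omega
  · have := cpre_add_le l hgt (le_of_lt hi)
    omega

lemma cpre_length (l : List ℕ) : cpre l l.length = l.sum + l.length := by
  simp [cpre]

lemma cpre_lt_length (l : List ℕ) {i d : ℕ} (hi : i < l.length) (hd : d ≤ l[i]) :
    cpre l i + d < l.sum + l.length := by
  have := cpre_add_le l hi (le_refl _)
  rw [cpre_length] at this
  omega

def cReg (l : List ℕ) : List Base :=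
  (l.map (fun a => List.replicate a Base.C ++ [Base.A])).flatten

lemma cReg_nil : cReg [] = [] := rfl

lemma cReg_cons (a : ℕ) (l : List ℕ) :
    cReg (a :: l) = List.replicate a Base.C ++ [Base.A] ++ cReg l := by
  simp [cReg]

lemma cReg_length (l : List ℕ) : (cReg l).length = l.sum + l.length := by
  induction l with
  | nil => rfl
  | cons a l ih => simp [cReg_cons, ih]; ring

lemma cpre_cons_succ (a : ℕ) (l : List ℕ) (i : ℕ) :
    cpre (a :: l) (i+1) = a + 1 + cpre l i := by
  simp [cpre, List.take_cons]; ring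

lemma cReg_getD_C (l : List ℕ) {i d : ℕ} (hi : i < l.length) (hd : d < l[i]) :
    (cReg l).getD (cpre l i + d) Base.A = Base.C := by
  induction l generalizing i with
  | nil => simp at hi
  | cons a l ih =>
    rcases i with _ | i
    · rw [cpre_zero]
      simp only [cReg_cons, List.append_assoc]
      rw [List.getD_append _ _ _ _ (by simpa using hd)]
      exact getD_replicate _ _ (by simpa using hd)
    · rw [cpre_cons_succ]
      simp only [cReg_cons, List.append_assoc]
      rw [List.getD_append_right _ _ _ _ (by simp; omega)]
      simp only [List.length_replicate]
      have h1 : a + 1 + cpre l i + d - a = 1 + (cpre l i + d) := by omega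
      rw [h1]
      rw [List.getD_append_right _ _ _ _ (by simp)]
      simp only [List.length_cons, List.length_nil]
      have h2 : 1 + (cpre l i + d) - 1 = cpre l i + d := by omega
      rw [h2]
      exact ih (by simpa using hi) (by simpa using hd)

lemma cReg_getD_A (l : List ℕ) {i : ℕ} (hi : i < l.length) :
    (cReg l).getD (cpre l i + l[i]) Base.A = Base.A := by
  induction l generalizing i with
  | nil => simp at hi
  | cons a l ih =>
    rcases i with _ | i
    · rw [cpre_zero]
      simp only [cReg_cons, List.append_assoc, List.getElem_cons_zero, Nat.zero_add]
      rw [List.getD_append_right _ _ _ _ (by simp)]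
      simp
    · rw [cpre_cons_succ]
      simp only [cReg_cons, List.append_assoc, List.getElem_cons_succ]
      rw [List.getD_append_right _ _ _ _ (by simp; omega)]
      simp only [List.length_replicate]
      have h1 : a + 1 + cpre l i + l[i]'(by simpa using hi) - a
          = 1 + (cpre l i + l[i]'(by simpa using hi)) := by omega
      rw [h1]
      rw [List.getD_append_right _ _ _ _ (by simp)]
      simp only [List.length_cons, List.length_nil]
      have h2 : 1 + (cpre l i + l[i]'(by simpa using hi)) - 1
          = cpre l i + l[i]'(by simpa using hi) := by omega
      rw [h2]
      exact ih (by simpa using hi)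

lemma cReg_C_dec (l : List ℕ) {idx : ℕ} (h : (cReg l).getD idx Base.A = Base.C) :
    ∃ i, ∃ (hi : i < l.length), ∃ d, d < l[i] ∧ idx = cpre l i + d := by
  induction l generalizing idx with
  | nil => simp [cReg_nil] at h
  | cons a l ih =>
    simp only [cReg_cons, List.append_assoc] at h
    rcases Nat.lt_or_ge idx a with hlt | hge
    · exact ⟨0, by simp, idx, by simpa using hlt, by simp [cpre_zero]⟩
    · rw [List.getD_append_right _ _ _ _ (by simpa using hge)] at h
      simp only [List.length_replicate] at h
      rcases Nat.lt_or_ge (idx - a) 1 with h1 | h1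
      · interval_cases h2 : (idx - a) <;> simp_all
      · rw [List.getD_append_right _ _ _ _ (by simpa using h1)] at h
        simp only [List.length_cons, List.length_nil] at h
        obtain ⟨i, hi, d, hd, he⟩ := ih h
        refine ⟨i+1, by simpa using hi, d, by simpa using hd, ?_⟩
        rw [cpre_cons_succ]
        omega


def gBlk (B : ℕ) : List Base := List.replicate B Base.G

def gReg (m B : ℕ) : List Base :=
  gBlk B ++ (List.replicate m (Base.A :: gBlk B)).flatten

lemma gReg_zero (B : ℕ) : gReg 0 B = gBlk B := by simp [gReg]

lemma gReg_succ (m B : ℕ) : gReg (m+1) B = gBlk B ++ Base.A :: gReg m B := by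
  simp [gReg, List.replicate_succ]

lemma intercalate_cons₂ {α} (s x y : List α) (l : List (List α)) :
    List.intercalate s (x :: y :: l) = x ++ s ++ List.intercalate s (y :: l) := by
  simp [List.intercalate, List.intersperse_cons_cons]

lemma intercalate_eq_gReg (m B : ℕ) :
    List.intercalate [Base.A] (List.replicate (m+1) (gBlk B)) = gReg m B := by
  induction m with
  | zero => simp [gReg_zero, List.intercalate]
  | succ m ih =>
    rw [List.replicate_succ, List.replicate_succ, intercalate_cons₂,
      ← List.replicate_succ, ih, gReg_succ]
    simp

lemma gReg_length (m B : ℕ) : (gReg m B).length = (m+1)*B + m := by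
  induction m with
  | zero => simp [gReg_zero, gBlk]
  | succ m ih => simp [gReg_succ, gBlk, ih]; ring

lemma gReg_getD_G {B : ℕ} : ∀ {t m e : ℕ}, t ≤ m → e < B →
    (gReg m B).getD (t*(B+1)+e) Base.A = Base.G := by
  intro t
  induction t with
  | zero =>
    intro m e _ he
    rcases m with _ | m
    · rw [gReg_zero]; simpa [gBlk] using getD_replicate Base.G Base.A he
    · rw [gReg_succ]
      rw [List.getD_append _ _ _ _ (by simpa [gBlk] using he)]
      simpa [gBlk] using getD_replicate Base.G Base.A he
  | succ t ih =>
    intro m e hm he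
    rcases m with _ | m
    · omega
    · rw [gReg_succ]
      rw [List.getD_append_right _ _ _ _ (by simp [gBlk]; nlinarith)]
      have h1 : (t+1)*(B+1)+e - (gBlk B).length = (t*(B+1)+e) + 1 := by
        simp [gBlk]; ring_nf; omega
      rw [h1, List.getD_cons_succ]
      exact ih (by omega) he

lemma gReg_getD_A {B : ℕ} : ∀ {t m : ℕ}, t < m →
    (gReg m B).getD (t*(B+1)+B) Base.A = Base.A := by
  intro t
  induction t with
  | zero =>
    intro m hm
    rcases m with _ | m
    · omega
    · rw [gReg_succ]
      have h0 : 0*(B+1)+B = B := by ring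
      rw [h0]
      rw [List.getD_append_right _ _ _ _ (le_of_eq (by simp [gBlk]))]
      simp [gBlk]
  | succ t ih =>
    intro m hm
    rcases m with _ | m
    · omega
    · rw [gReg_succ]
      have hr : (t+1)*(B+1) = t*(B+1)+B+1 := by ring
      rw [List.getD_append_right _ _ _ _ (by simp [gBlk])]
      have h1 : (t+1)*(B+1)+B - (gBlk B).length = (t*(B+1)+B) + 1 := by
        simp only [gBlk, List.length_replicate]; omega
      rw [h1, List.getD_cons_succ]
      exact ih (by omega)

lemma gReg_G_dec {B : ℕ} : ∀ {m idx : ℕ}, (gReg m B).getD idx Base.A = Base.G →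
    ∃ t, t ≤ m ∧ ∃ e, e < B ∧ idx = t*(B+1)+e := by
  intro m
  induction m with
  | zero =>
    intro idx h
    rw [gReg_zero] at h
    rcases Nat.lt_or_ge idx B with hlt | hge
    · exact ⟨0, le_refl _, idx, hlt, by simp⟩
    · rw [List.getD_eq_default _ _ (by simpa [gBlk] using hge)] at h
      exact absurd h (by simp)
  | succ m ih =>
    intro idx h
    rw [gReg_succ] at h
    rcases Nat.lt_or_ge idx B with hlt | hge
    · exact ⟨0, by omega, idx, hlt, by simp⟩
    · rw [List.getD_append_right _ _ _ _ (by simpa [gBlk] using hge)] at h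
      simp only [gBlk, List.length_replicate] at h
      rcases Nat.lt_or_ge (idx - B) 1 with h1 | h1
      · have : idx - B = 0 := by omega
        rw [this] at h
        exact absurd h (by simp)
      · have h2 : idx - B = (idx - B - 1) + 1 := by omega
        rw [h2, List.getD_cons_succ] at h
        obtain ⟨t, ht, e, he, hidx⟩ := ih h
        have hr : (t+1)*(B+1) = t*(B+1) + B + 1 := by ring
        exact ⟨t+1, by omega, e, he, by omega⟩

lemma gpos_uniq {B t e t' e' : ℕ} (he : e < B) (he' : e' < B)
    (h : t*(B+1)+e = t'*(B+1)+e') : t = t' ∧ e = e' := by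
  have h1 : ∀ a b : ℕ, b < B → (b + a*(B+1)) / (B+1) = a := by
    intro a b hb
    rw [Nat.add_mul_div_right _ _ (Nat.succ_pos B), Nat.div_eq_of_lt (by omega), Nat.zero_add]
  have h' : e + t*(B+1) = e' + t'*(B+1) := by omega
  have ht : t = t' := by rw [← h1 t e he, ← h1 t' e' he', h']
  subst ht
  exact ⟨rfl, by omega⟩

lemma mem_gReg {B m : ℕ} : ∀ b ∈ gReg m B, b = Base.G ∨ b = Base.A := by
  induction m with
  | zero => intro b hb; rw [gReg_zero, gBlk] at hb; left; exact (List.eq_of_mem_replicate hb)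
  | succ m ih =>
    intro b hb
    rw [gReg_succ] at hb
    rcases List.mem_append.1 hb with h | h
    · left; exact List.eq_of_mem_replicate h
    · rcases List.mem_cons.1 h with h | h
      · right; exact h
      · exact ih b h



lemma mem_cReg {l : List ℕ} : ∀ b ∈ cReg l, b = Base.C ∨ b = Base.A := by
  induction l with
  | nil => simp [cReg_nil]
  | cons a l ih =>
    intro b hb
    rw [cReg_cons] at hb
    rcases List.mem_append.1 hb with h | h
    · rcases List.mem_append.1 h with h | h
      · left; exact List.eq_of_mem_replicate h
      · right; simpa using h
    · exact ih b h

lemma getD_no {lst : List Base} {P : Base → Prop} (hP : P Base.A)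
    (hmem : ∀ b ∈ lst, P b) (j : ℕ) : P (lst.getD j Base.A) := by
  rcases Nat.lt_or_ge j lst.length with h | h
  · rw [List.getD_eq_getElem _ _ h]
    exact hmem _ (List.getElem_mem h)
  · rw [List.getD_eq_default _ _ h]
    exact hP

section Strand

variable {k : ℕ} (B : ℕ) (w : Fin k → ℕ)

/-- 0-based start of C-block `i`. -/
def cp (i : ℕ) : ℕ := cpre (List.ofFn w) i

/-- length of the C-region. -/
def Lc : ℕ := (∑ i, w i) + k

lemma ofFn_len : (List.ofFn w).length = k := List.length_ofFn

lemma ofFn_get (i : Fin k) : (List.ofFn w)[(i : ℕ)]'(by simp) = w i := by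
  simp

lemma cp_lt_L (i : Fin k) {d : ℕ} (hd : d ≤ w i) : cp w i + d < Lc w := by
  have := cpre_lt_length (List.ofFn w) (i := (i : ℕ)) (d := d) (by simp) (by simpa using hd)
  simpa [cp, Lc, List.sum_ofFn] using this

lemma cp_uniq {i i' : Fin k} {d d' : ℕ} (hd : d < w i) (hd' : d' < w i')
    (h : cp w i + d = cp w i' + d') : i = i' ∧ d = d' := by
  have := cpre_uniq (List.ofFn w) (i := (i : ℕ)) (i' := (i' : ℕ)) (d := d) (d' := d')
    (by simp) (by simp) (by simpa using hd) (by simpa using hd') h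
  exact ⟨Fin.ext this.1, this.2⟩

variable (m : ℕ)

lemma strand_eq (hm : k = 4*(m+1)) :
    lyngsoStrand k B w = cReg (List.ofFn w) ++ [Base.A, Base.A] ++ gReg m B := by
  have h4 : k / 4 = m + 1 := by omega
  rw [lyngsoStrand, h4, show List.replicate B Base.G = gBlk B from rfl, intercalate_eq_gReg]
  congr 1
  congr 1
  rw [cReg, List.map_ofFn]
  rfl

lemma strand_length (hm : k = 4*(m+1)) :
    (lyngsoStrand k B w).length = Lc w + 2 + ((m+1)*B + m) := by
  rw [strand_eq B w m hm]
  simp [cReg_length, gReg_length, Lc, List.sum_ofFn]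
  ring

lemma strand_getD_left (hm : k = 4*(m+1)) {idx : ℕ} (h : idx < Lc w) :
    (lyngsoStrand k B w).getD idx Base.A = (cReg (List.ofFn w)).getD idx Base.A := by
  rw [strand_eq B w m hm, List.append_assoc]
  exact List.getD_append _ _ _ _ (by rw [cReg_length]; simpa [Lc, List.sum_ofFn] using h)

lemma strand_getD_right (hm : k = 4*(m+1)) (j : ℕ) :
    (lyngsoStrand k B w).getD (Lc w + 2 + j) Base.A = (gReg m B).getD j Base.A := by
  rw [strand_eq B w m hm, List.append_assoc]
  rw [List.getD_append_right _ _ _ _ (by rw [cReg_length]; simp only [List.sum_ofFn, List.length_ofFn, Lc]; omega)]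
  have h1 : Lc w + 2 + j - (cReg (List.ofFn w)).length = 2 + j := by
    rw [cReg_length]; simp only [List.sum_ofFn, List.length_ofFn, Lc]; omega
  rw [h1, show ([Base.A, Base.A] ++ gReg m B) = Base.A :: Base.A :: gReg m B from rfl]
  rw [show 2 + j = (j+1)+1 by omega, List.getD_cons_succ, List.getD_cons_succ]

lemma strand_getD_midA1 (hm : k = 4*(m+1)) : (lyngsoStrand k B w).getD (Lc w) Base.A = Base.A := by
  rw [strand_eq B w m hm, List.append_assoc]
  rw [List.getD_append_right _ _ _ _ (by rw [cReg_length]; simp only [List.sum_ofFn, List.length_ofFn, Lc]; omega)]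
  have h1 : Lc w - (cReg (List.ofFn w)).length = 0 := by
    rw [cReg_length]; simp only [List.sum_ofFn, List.length_ofFn, Lc]; omega
  rw [h1]
  rfl

lemma strand_getD_midA2 (hm : k = 4*(m+1)) : (lyngsoStrand k B w).getD (Lc w + 1) Base.A = Base.A := by
  rw [strand_eq B w m hm, List.append_assoc]
  rw [List.getD_append_right _ _ _ _ (by rw [cReg_length]; simp only [List.sum_ofFn, List.length_ofFn, Lc]; omega)]
  have h1 : Lc w + 1 - (cReg (List.ofFn w)).length = 1 := by
    rw [cReg_length]; simp only [List.sum_ofFn, List.length_ofFn, Lc]; omega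
  rw [h1]
  rfl

lemma strand_C_at (hm : k = 4*(m+1)) (i : Fin k) {d : ℕ} (hd : d < w i) :
    (lyngsoStrand k B w).getD (cp w i + d) Base.A = Base.C := by
  rw [strand_getD_left B w m hm (cp_lt_L w i (le_of_lt hd))]
  exact cReg_getD_C _ (by simp) (by simpa using hd)

lemma strand_A_at (hm : k = 4*(m+1)) (i : Fin k) :
    (lyngsoStrand k B w).getD (cp w i + w i) Base.A = Base.A := by
  rw [strand_getD_left B w m hm (cp_lt_L w i (le_refl _))]
  have := cReg_getD_A (List.ofFn w) (i := (i : ℕ)) (by simp)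
  simpa [cp] using this

lemma strand_C_dec (hm : k = 4*(m+1)) {idx : ℕ} (h : (lyngsoStrand k B w).getD idx Base.A = Base.C) :
    ∃ i : Fin k, ∃ d, d < w i ∧ idx = cp w i + d := by
  rcases Nat.lt_or_ge idx (Lc w) with hlt | hge
  · rw [strand_getD_left B w m hm hlt] at h
    obtain ⟨i, hi, d, hd, he⟩ := cReg_C_dec _ h
    refine ⟨⟨i, by simpa using hi⟩, d, by simpa using hd, he⟩
  · exfalso
    rcases Nat.lt_or_ge idx (Lc w + 2) with h2 | h2
    · have hc : idx = Lc w ∨ idx = Lc w + 1 := by omega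
      rcases hc with hc | hc <;> subst hc
      · rw [strand_getD_midA1 B w m hm] at h; simp at h
      · rw [strand_getD_midA2 B w m hm] at h; simp at h
    · have he : idx = Lc w + 2 + (idx - (Lc w + 2)) := by omega
      rw [he, strand_getD_right B w m hm] at h
      have := getD_no (lst := gReg m B) (P := fun b => b = Base.G ∨ b = Base.A) (Or.inr rfl)
        mem_gReg (idx - (Lc w + 2))
      rcases this with h' | h' <;> rw [h'] at h <;> simp at h

lemma strand_G_at (hm : k = 4*(m+1)) {t e : ℕ} (ht : t ≤ m) (he : e < B) :
    (lyngsoStrand k B w).getD (Lc w + 2 + (t*(B+1)+e)) Base.A = Base.G := by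
  rw [strand_getD_right B w m hm]
  exact gReg_getD_G ht he

lemma strand_G_dec (hm : k = 4*(m+1)) {idx : ℕ} (h : (lyngsoStrand k B w).getD idx Base.A = Base.G) :
    ∃ t, t ≤ m ∧ ∃ e, e < B ∧ idx = Lc w + 2 + (t*(B+1)+e) := by
  rcases Nat.lt_or_ge idx (Lc w) with hlt | hge
  · exfalso
    rw [strand_getD_left B w m hm hlt] at h
    have := getD_no (lst := cReg (List.ofFn w)) (P := fun b => b = Base.C ∨ b = Base.A) (Or.inr rfl) mem_cReg idx
    rcases this with h' | h' <;> rw [h'] at h <;> simp at h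
  · rcases Nat.lt_or_ge idx (Lc w + 2) with h2 | h2
    · exfalso
      have hc : idx = Lc w ∨ idx = Lc w + 1 := by omega
      rcases hc with hc | hc <;> subst hc
      · rw [strand_getD_midA1 B w m hm] at h; simp at h
      · rw [strand_getD_midA2 B w m hm] at h; simp at h
    · have he : idx = Lc w + 2 + (idx - (Lc w + 2)) := by omega
      rw [he, strand_getD_right B w m hm] at h
      obtain ⟨t, ht, e, hee, hi⟩ := gReg_G_dec h
      exact ⟨t, ht, e, hee, by omega⟩

lemma strand_A_before_g (hm : k = 4*(m+1)) {t : ℕ} (ht : t ≤ m) :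
    (lyngsoStrand k B w).getD (Lc w + 1 + t*(B+1)) Base.A = Base.A := by
  rcases t with _ | u
  · simpa using strand_getD_midA2 B w m hm
  · have h1 : (u+1)*(B+1) = u*(B+1) + B + 1 := by ring
    have h2 : Lc w + 1 + (u+1)*(B+1) = Lc w + 2 + (u*(B+1) + B) := by omega
    rw [h2, strand_getD_right B w m hm]
    exact gReg_getD_A (by omega)

lemma strand_no_T (hm : k = 4*(m+1)) (idx : ℕ) : (lyngsoStrand k B w).getD idx Base.A ≠ Base.T := by
  rw [strand_eq B w m hm]
  have : ∀ b ∈ cReg (List.ofFn w) ++ [Base.A, Base.A] ++ gReg m B, b ≠ Base.T := by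
    intro b hb
    rcases List.mem_append.1 hb with h | h
    · rcases List.mem_append.1 h with h | h
      · rcases mem_cReg b h with h' | h' <;> simp [h']
      · rcases List.mem_cons.1 h with h' | h'
        · simp [h']
        · simp at h'; simp [h']
    · rcases mem_gReg b h with h' | h' <;> simp [h']
  exact getD_no (P := fun b => b ≠ Base.T) (by simp) this idx

end Strand

section Main

open Finset

lemma sum_pred {k : ℕ} (w : Fin k → ℕ) (hw : ∀ i, 0 < w i) :
    ∑ i, (w i - 1) = (∑ i, w i) - k := by
  have h1 : ∑ i, ((w i - 1) + 1) = ∑ i, w i := by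
    apply Finset.sum_congr rfl
    intro i _
    have := hw i; omega
  rw [Finset.sum_add_distrib] at h1
  simp at h1
  omega

lemma backward (k B : ℕ) (w : Fin k → ℕ) (m : ℕ) (hm : k = 4*(m+1)) (hB : 0 < B)
    (hw : ∀ i, 0 < w i)
    (P : Finset (Finset (Fin k))) (hPcard : P.card = m+1)
    (hcover : ∀ x : Fin k, ∃! t, t ∈ P ∧ x ∈ t)
    (hPt : ∀ t ∈ P, t.card = 4 ∧ ∑ i ∈ t, w i = B) :
    ∃ S, IsSecStructOf (lyngsoStrand k B w) S ∧ BPS S = (∑ i, w i) - k := by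
  classical
  choose grp hgP hgmem using fun x => (hcover x).exists
  have hsumg : ∀ i, ∑ j ∈ grp i, w j = B := fun i => (hPt _ (hgP i)).2
  set E := Finset.equivFinOfCardEq hPcard with hE
  set blk : Fin k → ℕ := fun i => (E ⟨grp i, hgP i⟩ : Fin (m+1)).val with hblk
  have hblk_le : ∀ i, blk i ≤ m := fun i => Fin.is_le _
  have hblk_inj : ∀ i i', blk i = blk i' → grp i = grp i' := by
    intro i i' h
    have := E.injective (Fin.ext h)
    simpa using this
  set off : Fin k → ℕ := fun i => ∑ j ∈ (grp i).filter (fun j => j < i), w j with hoff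
  have hoffw : ∀ i, off i + w i ≤ B := by
    intro i
    have hnm : i ∉ (grp i).filter (fun j => j < i) := by simp
    have hsub : insert i ((grp i).filter (fun j => j < i)) ⊆ grp i := by
      refine Finset.insert_subset (hgmem i) (Finset.filter_subset _ _)
    have h1 : ∑ j ∈ insert i ((grp i).filter (fun j => j < i)), w j = w i + off i := by
      rw [Finset.sum_insert hnm]
    have h2 := Finset.sum_le_sum_of_subset hsub (f := w)
    rw [h1, hsumg i] at h2
    omega
  have hofflt : ∀ i i', grp i = grp i' → i < i' → off i + w i ≤ off i' := by
    intro i i' hg hii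
    have hnm : i ∉ (grp i).filter (fun j => j < i) := by simp
    have hsub : insert i ((grp i).filter (fun j => j < i)) ⊆ (grp i').filter (fun j => j < i') := by
      intro j hj
      rcases Finset.mem_insert.1 hj with h | h
      · subst h
        simp only [Finset.mem_filter]
        exact ⟨hg ▸ hgmem _, hii⟩
      · simp only [Finset.mem_filter] at h ⊢
        exact ⟨hg ▸ h.1, lt_trans h.2 hii⟩
    have h2 := Finset.sum_le_sum_of_subset hsub (f := w)
    rw [Finset.sum_insert hnm] at h2
    simp only [hoff]
    omega
  have hoffinj : ∀ i i' d d', grp i = grp i' → d < w i → d' < w i' →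
      off i + d = off i' + d' → i = i' ∧ d = d' := by
    intro i i' d d' hg hd hd' h
    rcases lt_trichotomy i i' with hlt | heq | hgt
    · have := hofflt i i' hg hlt; omega
    · subst heq; omega
    · have := hofflt i' i hg.symm hgt; omega
  -- the pairing
  set pr : (Σ _ : Fin k, ℕ) → ℕ × ℕ := fun x =>
    (cp w x.1 + x.2 + 1, Lc w + 2 + ((blk x.1)*(B+1) + (B - 1 - (off x.1 + x.2))) + 1)
    with hpr
  set dom : Finset (Σ _ : Fin k, ℕ) := Finset.univ.sigma (fun i : Fin k => Finset.range (w i))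
    with hdom
  set S : Finset (ℕ × ℕ) := dom.image pr with hS
  have hmemdom : ∀ x : (Σ _ : Fin k, ℕ), x ∈ dom ↔ x.2 < w x.1 := by
    intro x; simp [hdom, Finset.mem_sigma]
  -- injectivity facts
  have hprinj : ∀ x ∈ dom, ∀ y ∈ dom, pr x = pr y → x = y := by
    intro x hx y hy h
    have h1 : cp w x.1 + x.2 = cp w y.1 + y.2 := by
      have := congrArg Prod.fst h
      simp only [hpr] at this
      omega
    obtain ⟨hi, hd⟩ := cp_uniq w ((hmemdom x).1 hx) ((hmemdom y).1 hy) h1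
    exact Sigma.ext hi (by simp [hd])
  have hfstinj : ∀ x ∈ dom, ∀ y ∈ dom, (pr x).1 = (pr y).1 → x = y := by
    intro x hx y hy h
    simp only [hpr] at h
    obtain ⟨hi, hd⟩ := cp_uniq w ((hmemdom x).1 hx) ((hmemdom y).1 hy) (by omega)
    exact Sigma.ext hi (by simp [hd])
  have hsndinj : ∀ x ∈ dom, ∀ y ∈ dom, (pr x).2 = (pr y).2 → x = y := by
    intro x hx y hy h
    simp only [hpr] at h
    have hx2 := (hmemdom x).1 hx
    have hy2 := (hmemdom y).1 hy
    have hex : B - 1 - (off x.1 + x.2) < B := by have := hoffw x.1; omega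
    have hey : B - 1 - (off y.1 + y.2) < B := by have := hoffw y.1; omega
    obtain ⟨hb, he⟩ := gpos_uniq (t := blk x.1) (t' := blk y.1) hex hey (by omega)
    have hg : grp x.1 = grp y.1 := hblk_inj _ _ hb
    have hxb : off x.1 + x.2 ≤ B - 1 := by have := hoffw x.1; omega
    have hyb : off y.1 + y.2 ≤ B - 1 := by have := hoffw y.1; omega
    obtain ⟨hi, hd⟩ := hoffinj x.1 y.1 x.2 y.2 hg hx2 hy2 (by omega)
    exact Sigma.ext hi (by simp [hd])
  -- basic coordinate bounds
  have hfst_le : ∀ x ∈ dom, 1 ≤ (pr x).1 ∧ (pr x).1 ≤ Lc w := by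
    intro x hx
    have := cp_lt_L w x.1 (le_of_lt ((hmemdom x).1 hx))
    simp only [hpr]
    omega
  have hsnd_bnd : ∀ x ∈ dom, Lc w + 3 ≤ (pr x).2 ∧
      (pr x).2 ≤ Lc w + 2 + ((m+1)*B + m) := by
    intro x hx
    have h1 : blk x.1 * (B+1) ≤ m * (B+1) := Nat.mul_le_mul_right _ (hblk_le x.1)
    have h2 : m*(B+1) + B = (m+1)*B + m := by ring
    have h3 : B - 1 - (off x.1 + x.2) ≤ B - 1 := by omega
    simp only [hpr]
    omega
  -- the structure is valid
  have hstruct : IsSecStructOf (lyngsoStrand k B w) S := by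
    constructor
    · intro p hp
      obtain ⟨x, hx, rfl⟩ := Finset.mem_image.1 hp
      have hb1 := hfst_le x hx
      have hb2 := hsnd_bnd x hx
      refine ⟨by omega, by omega, ?_, ?_⟩
      · rw [strand_length B w m hm]; omega
      · have hc : (pr x).1 - 1 = cp w x.1 + x.2 := by simp only [hpr]; omega
        have hgpos : (pr x).2 - 1 = Lc w + 2 + ((blk x.1)*(B+1) + (B - 1 - (off x.1 + x.2))) := by
          simp only [hpr]; omega
        rw [hc, hgpos, strand_C_at B w m hm x.1 ((hmemdom x).1 hx),
          strand_G_at B w m hm (hblk_le x.1) (by have := hoffw x.1; omega)]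
        exact Or.inr (Or.inr (Or.inl ⟨rfl, rfl⟩))
    · intro p hp q hq hpq
      obtain ⟨x, hx, rfl⟩ := Finset.mem_image.1 hp
      obtain ⟨y, hy, rfl⟩ := Finset.mem_image.1 hq
      have hxy : x ≠ y := fun h => hpq (by rw [h])
      refine ⟨?_, ?_, ?_, ?_⟩
      · exact fun h => hxy (hfstinj x hx y hy h)
      · have := hfst_le x hx; have := hsnd_bnd y hy; omega
      · have := hsnd_bnd x hx; have := hfst_le y hy; omega
      · exact fun h => hxy (hsndinj x hx y hy h)
  refine ⟨S, hstruct, ?_⟩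
  -- counting the stackings
  set dom' : Finset (Σ _ : Fin k, ℕ) := Finset.univ.sigma (fun i : Fin k => Finset.range (w i - 1))
    with hdom'
  have hmemdom' : ∀ x : (Σ _ : Fin k, ℕ), x ∈ dom' ↔ x.2 < w x.1 - 1 := by
    intro x; simp [hdom', Finset.mem_sigma]
  have hsub' : dom' ⊆ dom := by
    intro x hx
    rw [hmemdom]; rw [hmemdom'] at hx; omega
  have hstack : S.filter (fun p => (p.1 + 1, p.2 - 1) ∈ S) = dom'.image pr := by
    apply Finset.ext
    intro p
    simp only [Finset.mem_filter]
    constructor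
    · rintro ⟨hp, hst⟩
      obtain ⟨x, hx, rfl⟩ := Finset.mem_image.1 hp
      obtain ⟨y, hy, hyeq⟩ := Finset.mem_image.1 hst
      rw [Finset.mem_image]
      refine ⟨x, ?_, rfl⟩
      rw [hmemdom']
      by_contra hcon
      have hx2 : x.2 < w x.1 := (hmemdom x).1 hx
      have hx2' : x.2 + 1 = w x.1 := by omega
      -- then (pr x).1 + 1 sits on the separator A, contradiction with it being a C position
      have h1 : (pr y).1 = (pr x).1 + 1 := congrArg Prod.fst hyeq
      have h2 : cp w y.1 + y.2 = cp w x.1 + w x.1 := by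
        simp only [hpr] at h1; omega
      have hCc := strand_C_at B w m hm y.1 ((hmemdom y).1 hy)
      rw [h2, strand_A_at B w m hm x.1] at hCc
      exact absurd hCc (by simp)
    · intro hp
      obtain ⟨x, hx, rfl⟩ := Finset.mem_image.1 hp
      have hx2 : x.2 < w x.1 - 1 := (hmemdom' x).1 hx
      have hxw : x.2 < w x.1 := by omega
      refine ⟨Finset.mem_image.2 ⟨x, hsub' hx, rfl⟩, ?_⟩
      rw [Finset.mem_image]
      refine ⟨⟨x.1, x.2 + 1⟩, (hmemdom _).2 (by simp; omega), ?_⟩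
      have hb : off x.1 + x.2 + 1 ≤ B - 1 := by have := hoffw x.1; omega
      simp only [hpr]
      have e1 : cp w x.1 + (x.2+1) + 1 = cp w x.1 + x.2 + 1 + 1 := by omega
      have e2 : blk x.1 * (B+1) + (B - 1 - (off x.1 + (x.2+1)))
          = blk x.1 * (B+1) + (B - 1 - (off x.1 + x.2)) - 1 := by omega
      rw [Prod.mk.injEq]
      constructor
      · omega
      · omega
  rw [BPS, hstack, Finset.card_image_of_injOn (fun x hx y hy h => hprinj x (hsub' hx) y (hsub' hy) h)]
  rw [hdom', Finset.card_sigma]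
  simp only [Finset.card_range]
  exact sum_pred w hw


lemma build_partition (k B m : ℕ) (w : Fin k → ℕ)
    (tA : Fin k → ℕ) (htA : ∀ i, tA i ≤ m)
    (hcard4 : ∀ t, t ≤ m → (Finset.univ.filter fun i => tA i = t).card = 4)
    (hsumB : ∀ t, t ≤ m → ∑ i ∈ Finset.univ.filter (fun i => tA i = t), w i = B) :
    ∃ P : Finset (Finset (Fin k)),
      P.card = m+1 ∧ (∀ x : Fin k, ∃! t, t ∈ P ∧ x ∈ t) ∧
      (∀ t ∈ P, t.card = 4 ∧ ∑ i ∈ t, w i = B) := by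
  classical
  set G : ℕ → Finset (Fin k) := fun t => Finset.univ.filter (fun i => tA i = t) with hG
  have hGmem : ∀ (t : ℕ) (i : Fin k), i ∈ G t ↔ tA i = t := by
    intro t i; simp [hG]
  have hGne : ∀ t, t ≤ m → (G t).Nonempty := by
    intro t ht
    rw [← Finset.card_pos, hcard4 t ht]; omega
  refine ⟨(Finset.range (m+1)).image G, ?_, ?_, ?_⟩
  · rw [Finset.card_image_of_injOn, Finset.card_range]
    intro t ht t' ht' h
    simp only [Finset.coe_range, Set.mem_Iio] at ht ht'
    obtain ⟨i, hi⟩ := hGne t (by omega)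
    have h1 : tA i = t := (hGmem t i).1 hi
    have h2 : tA i = t' := (hGmem t' i).1 (h ▸ hi)
    omega
  · intro x
    refine ⟨G (tA x), ⟨Finset.mem_image.2 ⟨tA x, Finset.mem_range.2 (by have := htA x; omega), rfl⟩,
      (hGmem _ x).2 rfl⟩, ?_⟩
    rintro t' ⟨ht', hx⟩
    obtain ⟨u, hu, rfl⟩ := Finset.mem_image.1 ht'
    rw [(hGmem u x).1 hx]
  · intro t ht
    obtain ⟨u, hu, rfl⟩ := Finset.mem_image.1 ht
    rw [Finset.mem_range] at hu
    exact ⟨hcard4 u (by omega), hsumB u (by omega)⟩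


lemma forward (k B : ℕ) (w : Fin k → ℕ) (m : ℕ) (hm : k = 4*(m+1)) (hB5 : 5 ≤ B)
    (hw2 : ∀ i, 2 ≤ w i) (hlow : ∀ i, B < 5 * w i) (hhigh : ∀ i, 3 * w i < B)
    (hsum : ∑ i, w i = B * (m+1))
    (S : Finset (ℕ × ℕ)) (hSstr : IsSecStructOf (lyngsoStrand k B w) S)
    (hbps : BPS S = (∑ i, w i) - k) :
    ∃ P : Finset (Finset (Fin k)),
      P.card = m+1 ∧ (∀ x : Fin k, ∃! t, t ∈ P ∧ x ∈ t) ∧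
      (∀ t ∈ P, t.card = 4 ∧ ∑ i ∈ t, w i = B) := by
  classical
  obtain ⟨hS1, hS2⟩ := hSstr
  -- every pair joins a C-position to a G-position
  have hdec : ∀ p ∈ S, ∃ (i : Fin k) (d t e : ℕ), d < w i ∧ t ≤ m ∧ e < B ∧
      p.1 = cp w i + d + 1 ∧ p.2 = Lc w + 2 + (t*(B+1)+e) + 1 := by
    intro p hp
    obtain ⟨hp1, hplt, hple, hcomp⟩ := hS1 p hp
    have hnT1 := strand_no_T B w m hm (p.1 - 1)
    have hnT2 := strand_no_T B w m hm (p.2 - 1)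
    rcases hcomp with ⟨h1, h2⟩ | ⟨h1, h2⟩ | ⟨h1, h2⟩ | ⟨h1, h2⟩
    · exact absurd h2 hnT2
    · exact absurd h1 hnT1
    · obtain ⟨i, d, hd, he⟩ := strand_C_dec B w m hm h1
      obtain ⟨t, ht, e, hee, he2⟩ := strand_G_dec B w m hm h2
      exact ⟨i, d, t, e, hd, ht, hee, by omega, by omega⟩
    · exfalso
      obtain ⟨t, ht, e, hee, he2⟩ := strand_G_dec B w m hm h1
      obtain ⟨i, d, hd, he⟩ := strand_C_dec B w m hm h2
      have := cp_lt_L w i (le_of_lt hd)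
      omega
  have hfst : ∀ p ∈ S, ∀ q ∈ S, p.1 = q.1 → p = q := by
    intro p hp q hq h
    by_contra hne
    exact (hS2 p hp q hq hne).1 h
  have hsnd : ∀ p ∈ S, ∀ q ∈ S, p.2 = q.2 → p = q := by
    intro p hp q hq h
    by_contra hne
    exact (hS2 p hp q hq hne).2.2.2 h
  set T : Finset (ℕ × ℕ) := S.filter (fun p => (p.1 + 1, p.2 - 1) ∈ S) with hT
  -- the stacked pairs' first coordinates exhaust all non-final C-block positions
  have hTS : T ⊆ S := Finset.filter_subset _ _
  have hTbps : T.card = (∑ i, w i) - k := hbps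
  have hCkey : ∀ (i : Fin k) (d : ℕ), d < w i - 1 → ∃ p ∈ T, p.1 = cp w i + d + 1 := by
    set E : Finset ℕ := ((Finset.univ.sigma fun i : Fin k => Finset.range (w i - 1)).image
      (fun x => cp w x.1 + x.2 + 1)) with hE
    have hEcard : E.card = (∑ i, w i) - k := by
      rw [hE, Finset.card_image_of_injOn, Finset.card_sigma]
      · simp only [Finset.card_range]
        exact sum_pred w (fun i => by have := hw2 i; omega)
      · intro x hx y hy h
        rw [Finset.mem_coe, Finset.mem_sigma] at hx hy
        have hxd : x.2 < w x.1 - 1 := by simpa using hx.2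
        have hyd : y.2 < w y.1 - 1 := by simpa using hy.2
        have h' : cp w x.1 + x.2 + 1 = cp w y.1 + y.2 + 1 := h
        obtain ⟨hi, hd⟩ := cp_uniq w (show x.2 < w x.1 by omega) (show y.2 < w y.1 by omega)
          (by omega)
        exact Sigma.ext hi (by simp [hd])
    have hImSub : T.image Prod.fst ⊆ E := by
      intro a ha
      obtain ⟨p, hpT, rfl⟩ := Finset.mem_image.1 ha
      have hpS : p ∈ S := hTS hpT
      have hq : (p.1 + 1, p.2 - 1) ∈ S := (Finset.mem_filter.1 hpT).2
      obtain ⟨i, d, t, e, hd, ht, hee, h1, h2⟩ := hdec p hpS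
      obtain ⟨i', d', t', e', hd', ht', hee', h1', h2'⟩ := hdec _ hq
      have h1'' : p.1 + 1 = cp w i' + d' + 1 := h1'
      have hd1 : d + 1 < w i := by
        by_contra hcon
        have hdd : d + 1 = w i := by omega
        have h3 : cp w i' + d' = cp w i + w i := by omega
        have hc := strand_C_at B w m hm i' hd'
        rw [h3, strand_A_at B w m hm i] at hc
        exact absurd hc (by simp)
      rw [hE, Finset.mem_image]
      refine ⟨⟨i, d⟩, Finset.mem_sigma.2 ⟨Finset.mem_univ _, Finset.mem_range.2 ?_⟩,
        show cp w i + d + 1 = p.1 from by omega⟩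
      show d < w i - 1
      omega
    have hTcard : (T.image Prod.fst).card = T.card := by
      apply Finset.card_image_of_injOn
      intro p hp q hq h
      exact hfst p (hTS (Finset.mem_coe.1 hp)) q (hTS (Finset.mem_coe.1 hq)) h
    have hEq : T.image Prod.fst = E :=
      Finset.eq_of_subset_of_card_le hImSub (by rw [hEcard, hTcard, hTbps])
    intro i d hd
    have hmemE : cp w i + d + 1 ∈ E := by
      rw [hE, Finset.mem_image]
      exact ⟨⟨i, d⟩, Finset.mem_sigma.2 ⟨Finset.mem_univ _, Finset.mem_range.2 hd⟩, rfl⟩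
    rw [← hEq] at hmemE
    obtain ⟨p, hpT, hp1⟩ := Finset.mem_image.1 hmemE
    exact ⟨p, hpT, hp1⟩
  -- each block is matched to a descending run within a single G-block
  have hchain : ∀ i : Fin k, ∃ t, t ≤ m ∧ ∃ e, e < B ∧ w i ≤ e + 1 ∧
      ∀ d, d < w i → (cp w i + d + 1, Lc w + 2 + (t*(B+1) + (e - d)) + 1) ∈ S := by
    intro i
    have hwi := hw2 i
    obtain ⟨p0, hp0T, hp01⟩ := hCkey i 0 (by omega)
    have hp0S : p0 ∈ S := hTS hp0T
    obtain ⟨i0, d0, t0, e0, hd0, ht0, he0, h01, h02⟩ := hdec p0 hp0S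
    obtain ⟨hi0, hd00⟩ := cp_uniq w hd0 (show 0 < w i by omega) (by omega)
    subst hd00
    rw [hi0] at hd0 h01
    have hstep : ∀ d g, d < w i - 1 → (cp w i + d + 1, g) ∈ S →
        (cp w i + d + 2, g - 1) ∈ S := by
      intro d g hd hg
      obtain ⟨p, hpT, hp1⟩ := hCkey i d hd
      have hpS : p ∈ S := hTS hpT
      have hpe : p = (cp w i + d + 1, g) := hfst p hpS _ hg (by exact hp1)
      have hstk := (Finset.mem_filter.1 hpT).2
      rw [hpe] at hstk
      exact hstk
    have hiter : ∀ d, d ≤ w i - 1 → (cp w i + d + 1, p0.2 - d) ∈ S := by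
      intro d
      induction d with
      | zero =>
        intro _
        have he : (cp w i + 0 + 1, p0.2 - 0) = p0 := by
          rw [Prod.ext_iff]
          exact ⟨by omega, by omega⟩
        rw [he]
        exact hp0S
      | succ d ih =>
        intro hdle
        have h1 := ih (by omega)
        have h2 := hstep d (p0.2 - d) (by omega) h1
        have e2 : p0.2 - d - 1 = p0.2 - (d+1) := by omega
        have e3 : cp w i + d + 2 = cp w i + (d+1) + 1 := by omega
        rw [e2, e3] at h2
        exact h2
    have hde : ∀ d, d ≤ w i - 1 → d ≤ e0 := by
      intro d
      induction d with
      | zero => intro _; omega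
      | succ d ih =>
        intro hdle
        have hd0' := ih (by omega)
        by_contra hcon
        have he0d : e0 = d := by omega
        have hq := hiter (d+1) hdle
        obtain ⟨i', d', t', e', hd', ht', hee', h1', h2'⟩ := hdec _ hq
        have h2'' : p0.2 - (d+1) = Lc w + 2 + (t'*(B+1)+e') + 1 := h2'
        have hx : Lc w + 2 + (t'*(B+1)+e') = Lc w + 1 + t0*(B+1) := by omega
        have hG := strand_G_at B w m hm ht' hee'
        rw [hx, strand_A_before_g B w m hm ht0] at hG
        exact absurd hG (by simp)
    refine ⟨t0, ht0, e0, he0, ?_, ?_⟩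
    · have := hde (w i - 1) (le_refl _); omega
    · intro d hdlt
      have h1 := hiter d (by omega)
      have hdee : d ≤ e0 := hde d (by omega)
      have he : p0.2 - d = Lc w + 2 + (t0*(B+1) + (e0 - d)) + 1 := by omega
      rwa [he] at h1
  choose tA htA eA heA heAw hpair using hchain
  -- per-G-block counting
  have hcount : ∀ t, ∑ i ∈ Finset.univ.filter (fun i => tA i = t), w i ≤ B := by
    intro t
    set F := (Finset.univ.filter (fun i => tA i = t)).sigma (fun i => Finset.range (w i))
      with hF
    have h1 : F.card = ∑ i ∈ Finset.univ.filter (fun i => tA i = t), w i := by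
      rw [hF, Finset.card_sigma]
      simp
    have h2 : F.image (fun x => eA x.1 - x.2) ⊆ Finset.range B := by
      intro a ha
      obtain ⟨x, hx, rfl⟩ := Finset.mem_image.1 ha
      exact Finset.mem_range.2 (by have := heA x.1; omega)
    have h3 : (F.image (fun x => eA x.1 - x.2)).card = F.card := by
      apply Finset.card_image_of_injOn
      intro x hx y hy h
      rw [Finset.mem_coe, hF, Finset.mem_sigma] at hx hy
      have hxt : tA x.1 = t := by have := hx.1; simpa using this
      have hyt : tA y.1 = t := by have := hy.1; simpa using this
      have hxd : x.2 < w x.1 := by have := hx.2; simpa using this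
      have hyd : y.2 < w y.1 := by have := hy.2; simpa using this
      have hh : eA x.1 - x.2 = eA y.1 - y.2 := h
      have px := hpair x.1 x.2 hxd
      have py := hpair y.1 y.2 hyd
      rw [hxt] at px
      rw [hyt] at py
      have hpe := hsnd _ px _ py
        (congrArg (fun z => Lc w + 2 + (t*(B+1)+z) + 1) hh)
      have hfst_eq : cp w x.1 + x.2 + 1 = cp w y.1 + y.2 + 1 := congrArg Prod.fst hpe
      obtain ⟨hi, hd⟩ := cp_uniq w hxd hyd (by omega)
      exact Sigma.ext hi (by simp [hd])
    have h4 := Finset.card_le_card h2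
    rw [h3, h1] at h4
    simpa using h4
  have heach : ∀ t, t ≤ m → ∑ i ∈ Finset.univ.filter (fun i => tA i = t), w i = B := by
    intro t ht
    by_contra hne
    have hlt : ∑ i ∈ Finset.univ.filter (fun i => tA i = t), w i < B :=
      lt_of_le_of_ne (hcount t) hne
    have htot := Finset.sum_fiberwise_of_maps_to (s := Finset.univ) (g := tA) (t := Finset.range (m+1))
      (fun i _ => Finset.mem_range.2 (by have := htA i; omega)) w
    have hstrict : ∑ t' ∈ Finset.range (m+1),
        (∑ i ∈ Finset.univ.filter (fun i => tA i = t'), w i) <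
        ∑ _t' ∈ Finset.range (m+1), B :=
      Finset.sum_lt_sum (fun t' _ => hcount t') ⟨t, Finset.mem_range.2 (by omega), hlt⟩
    rw [htot, Finset.sum_const, Finset.card_range, smul_eq_mul, hsum, mul_comm] at hstrict
    exact lt_irrefl _ hstrict
  have hcard4 : ∀ t, t ≤ m → (Finset.univ.filter fun i => tA i = t).card = 4 := by
    intro t ht
    set Gt := Finset.univ.filter (fun i => tA i = t) with hGt
    have hsumB := heach t ht
    have hne : Gt.Nonempty := Finset.nonempty_of_sum_ne_zero (f := w) (by rw [hsumB]; omega)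
    have h5 : Gt.card * B < 5 * B := by
      have h1 : ∑ _i ∈ Gt, B < ∑ i ∈ Gt, 5 * w i :=
        Finset.sum_lt_sum_of_nonempty hne (fun i _ => hlow i)
      rw [Finset.sum_const, smul_eq_mul, ← Finset.mul_sum, hsumB] at h1
      exact h1
    have h3 : 3 * B < Gt.card * B := by
      have h1 : ∑ i ∈ Gt, 3 * w i < ∑ _i ∈ Gt, B :=
        Finset.sum_lt_sum_of_nonempty hne (fun i _ => hhigh i)
      rw [Finset.sum_const, smul_eq_mul, ← Finset.mul_sum, hsumB] at h1
      exact h1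
    rcases Nat.lt_or_ge Gt.card 4 with h | h
    · exfalso
      have h6 : Gt.card * B ≤ 3 * B := Nat.mul_le_mul_right B (by omega)
      omega
    · rcases Nat.lt_or_ge 4 Gt.card with h' | h'
      · exfalso
        have h6 : 5 * B ≤ Gt.card * B := Nat.mul_le_mul_right B (by omega)
        omega
      · omega
  exact build_partition k B m w tA htA hcard4 heach


end Main
end Lyng

/-- Lyngsø-style reduction from 4-PARTITION to BPS: given a 4-PARTITION instance
`(a₁,…,a_k, w, B)` (with `k` a positive multiple of 4, positive weights,
`B/5 < w(aᵢ) < B/3`, and `Σᵢ w(aᵢ) = B·k/4`), the strand `s` admits a secondary structure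
with exactly `K = Σᵢ w(aᵢ) − k` base pair stackings iff `{1,…,k}` can be partitioned into
`k/4` four-element subsets each of total weight exactly `B`. -/
theorem bps_iff_fourPartition (k B : ℕ) (w : Fin k → ℕ)
    (hk : 0 < k) (hk4 : 4 ∣ k) (hB : 0 < B) (hw : ∀ i, 0 < w i)
    (hlow : ∀ i, B < 5 * w i) (hhigh : ∀ i, 3 * w i < B)
    (hsum : ∑ i, w i = B * (k / 4)) :
    (∃ S : Finset (ℕ × ℕ),
        IsSecStructOf (lyngsoStrand k B w) S ∧ BPS S = (∑ i, w i) - k) ↔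
    (∃ P : Finset (Finset (Fin k)),
        P.card = k / 4 ∧
        (∀ x : Fin k, ∃! t, t ∈ P ∧ x ∈ t) ∧
        (∀ t ∈ P, t.card = 4 ∧ ∑ i ∈ t, w i = B)) := by
  classical
  obtain ⟨c, rfl⟩ := hk4
  have hc : 0 < c := by omega
  set m : ℕ := c - 1 with hmdef
  have hm : 4 * c = 4 * (m + 1) := by omega
  have hdiv : 4 * c / 4 = m + 1 := by omega
  rw [hdiv] at hsum ⊢
  have hB4 : 4 ≤ B := by
    have h0 := hhigh ⟨0, hk⟩
    have h1 := hw ⟨0, hk⟩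
    omega
  constructor
  · rintro ⟨S, hS1, hS2⟩
    rcases Nat.lt_or_ge B 5 with hB5 | hB5
    · -- B = 4, all weights are 1: any partition into consecutive quadruples works
      have hBeq : B = 4 := by omega
      have hw1 : ∀ i, w i = 1 := by
        intro i
        have := hhigh i
        have := hw i
        omega
      have hcard4 : ∀ t, t ≤ m →
          (Finset.univ.filter fun i : Fin (4*c) => (i : ℕ)/4 = t).card = 4 := by
        intro t ht
        rw [Finset.card_filter]
        rw [Fin.sum_univ_eq_sum_range (fun n => if n/4 = t then 1 else 0)]
        rw [← Finset.card_filter]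
        have he : (Finset.range (4*c)).filter (fun n => n/4 = t) =
            Finset.Ico (4*t) (4*t+4) := by
          ext n
          simp only [Finset.mem_filter, Finset.mem_range, Finset.mem_Ico]
          omega
        rw [he, Nat.card_Ico]
        omega
      refine Lyng.build_partition (4*c) B m w (fun i => (i : ℕ)/4)
        (fun i => by show (i : ℕ)/4 ≤ m; have := i.isLt; omega) hcard4 ?_
      intro t ht
      have hsc : ∀ i ∈ (Finset.univ.filter fun i : Fin (4*c) => (i : ℕ)/4 = t), w i = 1 :=
        fun i _ => hw1 i
      rw [Finset.sum_congr rfl hsc, Finset.sum_const, hcard4 t ht, smul_eq_mul]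
      omega
    · have hw2 : ∀ i, 2 ≤ w i := by
        intro i
        have := hlow i
        omega
      exact Lyng.forward (4*c) B w m hm hB5 hw2 hlow hhigh hsum S hS1 hS2
  · rintro ⟨P, hP1, hP2, hP3⟩
    exact Lyng.backward (4*c) B w m hm hB (fun i => hw i) P hP1 hP2 hP3
end
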